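/- Let (V, ≤) be a linear order. The priority-queue specification — the set of finite sequences over the symbols enq(v) and deq(v) (v ∈ V) executable on an initially empty finite multiset over V, where enq(v) inserts v into the multiset, and deq(v) is enabled only if v is a maximum element of the current multiset and removes one copy of v — is anagram-agnostic. -/
import Mathlib

/-- τ1 ∼ τ2 : the two sequences admit exactly the same legal continuations. -/
def SpecEquiv {A : Type} (T : Set (List A)) (τ1 τ2 : List A) : Prop :=
  ∀ τ' : List A, τ1 ++ τ' ∈ T ↔ τ2 ++ τ' ∈ T

/-- A specification is anagram-agnostic if any two of its members that are
permutations of one another (anagrams) are equivalent. -/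
def AnagramAgnostic {A : Type} (T : Set (List A)) : Prop :=
  ∀ τ1 ∈ T, ∀ τ2 ∈ T, τ1.Perm τ2 → SpecEquiv T τ1 τ2

inductive PQOp (V : Type) : Type
  | enq (v : V) : PQOp V
  | deq (v : V) : PQOp V

/-- Execution of priority-queue sequences on a finite multiset: `enq v` inserts
`v`; `deq v` is enabled only if `v` is a maximum element of the multiset and
removes one copy of it. -/
inductive PQExec {V : Type} [LinearOrder V] : Multiset V → List (PQOp V) → Multiset V → Prop
  | nil (s : Multiset V) : PQExec s [] s
  | enq {s s' : Multiset V} {w : List (PQOp V)} (v : V) :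
      PQExec (v ::ₘ s) w s' → PQExec s (PQOp.enq v :: w) s'
  | deq {s s' : Multiset V} {w : List (PQOp V)} (v : V) :
      v ∈ s → (∀ u ∈ s, u ≤ v) → PQExec (s.erase v) w s' →
      PQExec s (PQOp.deq v :: w) s'

/-- The priority-queue specification: the sequences executable from the empty
multiset. -/
def PQSpec (V : Type) [LinearOrder V] : Set (List (PQOp V)) :=
  {w | ∃ s : Multiset V, PQExec 0 w s}

def enqs {V : Type} (w : List (PQOp V)) : Multiset V :=
  (w.filterMap fun o => match o with | PQOp.enq v => some v | _ => none : List V)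

def deqs {V : Type} (w : List (PQOp V)) : Multiset V :=
  (w.filterMap fun o => match o with | PQOp.deq v => some v | _ => none : List V)

lemma pq_det {V : Type} [LinearOrder V] {s s1 s2 : Multiset V} {w : List (PQOp V)}
    (h1 : PQExec s w s1) (h2 : PQExec s w s2) : s1 = s2 := by
  induction h1 generalizing s2 with
  | nil => cases h2; rfl
  | enq v _ ih => cases h2 with | enq _ h => exact ih h
  | deq v _ _ _ ih => cases h2 with | deq _ _ _ h => exact ih h

lemma pq_append {V : Type} [LinearOrder V] {s s'' : Multiset V} {w1 w2 : List (PQOp V)} :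
    PQExec s (w1 ++ w2) s'' ↔ ∃ s', PQExec s w1 s' ∧ PQExec s' w2 s'' := by
  constructor
  · intro h
    induction w1 generalizing s with
    | nil => exact ⟨s, PQExec.nil s, h⟩
    | cons o w1 ih =>
      cases h with
      | enq v h => obtain ⟨t, h1, h2⟩ := ih h; exact ⟨t, PQExec.enq v h1, h2⟩
      | deq v hm hmax h => obtain ⟨t, h1, h2⟩ := ih h; exact ⟨t, PQExec.deq v hm hmax h1, h2⟩
  · rintro ⟨t, h1, h2⟩
    induction h1 with
    | nil => exact h2
    | enq v _ ih => exact PQExec.enq v (ih h2)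
    | deq v hm hmax _ ih => exact PQExec.deq v hm hmax (ih h2)

lemma pq_state {V : Type} [LinearOrder V] {s s' : Multiset V} {w : List (PQOp V)}
    (h : PQExec s w s') : s' + deqs w = s + enqs w := by
  induction h with
  | nil => simp [enqs, deqs]
  | enq v _ ih =>
    simp only [enqs, deqs, List.filterMap_cons, ← Multiset.cons_coe] at *
    rw [ih, Multiset.cons_add, Multiset.add_cons]
  | deq v hm _ _ ih =>
    simp only [enqs, deqs, List.filterMap_cons, ← Multiset.cons_coe] at *
    rw [Multiset.add_cons, ih, ← Multiset.cons_add, Multiset.cons_erase hm]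

theorem stmt7 (V : Type) [LinearOrder V] : AnagramAgnostic (PQSpec V) := by
  rintro τ1 ⟨s1, h1⟩ τ2 ⟨s2, h2⟩ hperm τ'
  have heq : s1 = s2 := by
    have e1 := pq_state h1
    have e2 := pq_state h2
    have he : enqs τ1 = enqs τ2 := Multiset.coe_eq_coe.mpr (hperm.filterMap _)
    have hd : deqs τ1 = deqs τ2 := Multiset.coe_eq_coe.mpr (hperm.filterMap _)
    have : s1 + deqs τ1 = s2 + deqs τ1 := by rw [e1, hd, e2, he]
    exact add_right_cancel this
  constructor
  · rintro ⟨t, ht⟩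
    obtain ⟨m, hm1, hm2⟩ := pq_append.mp ht
    have hms : m = s1 := pq_det hm1 h1
    subst hms; rw [heq] at hm2
    exact ⟨t, pq_append.mpr ⟨s2, h2, hm2⟩⟩
  · rintro ⟨t, ht⟩
    obtain ⟨m, hm1, hm2⟩ := pq_append.mp ht
    have hms : m = s2 := pq_det hm1 h2
    subst hms; rw [← heq] at hm2
    exact ⟨t, pq_append.mpr ⟨s1, h1, hm2⟩⟩
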